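/- Let A be a Hermitian matrix and g(x) := (i/√(2π)) ∫₀^{y_J} dy ∫_{−z_K}^{z_K} dz · z e^{−z²/2} e^{−ixyz}. For every x with 1/b ≤ |x| ≤ 1, the truncated double integral satisfies |g(x) − 1/x| ≤ (1/|x|) e^{−(x y_J)²/2} + (2/|x|) e^{−z_K²/2}. -/

import Mathlib

open MeasureTheory

/-- The truncated Fourier-integral approximation to 1/x:
g(x) = (i/√(2π)) ∫₀^{y_J} ∫_{−z_K}^{z_K} z e^{−z²/2} e^{−ixyz} dz dy. -/
noncomputable def truncInv (yJ zK : ℝ) (x : ℝ) : ℂ :=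
  (Complex.I / (Real.sqrt (2 * Real.pi) : ℂ)) *
    ∫ y in (0 : ℝ)..yJ, ∫ z in (-zK)..zK,
      (z : ℂ) * Complex.exp (-(z : ℂ) ^ 2 / 2) * Complex.exp (-Complex.I * x * y * z)

section Stmt10Aux

open Set Complex

/-- integrand -/
noncomputable def fI (x y z : ℝ) : ℂ :=
  (z : ℂ) * Complex.exp (-(z : ℂ) ^ 2 / 2) * Complex.exp (-Complex.I * x * y * z)

/-- inner y-integral in closed form -/
noncomputable def GI (x yJ : ℝ) (z : ℝ) : ℂ :=
  Complex.exp (-(z : ℂ) ^ 2 / 2) * (1 - Complex.exp (-Complex.I * x * yJ * z)) / (Complex.I * x)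

lemma norm_fI (x y z : ℝ) : ‖fI x y z‖ = |z| * Real.exp (-z ^ 2 / 2) := by
  unfold fI
  rw [norm_mul, norm_mul]
  have h1 : (-(z : ℂ) ^ 2 / 2) = ((-z ^ 2 / 2 : ℝ) : ℂ) := by push_cast; ring
  have h2 : (-Complex.I * x * y * z) = ((-(x * y * z) : ℝ) : ℂ) * Complex.I := by push_cast; ring
  rw [h1, h2]
  simp [Complex.norm_exp, ← Complex.ofReal_pow]

lemma cont_fI (x : ℝ) : Continuous (fun p : ℝ × ℝ => fI x p.1 p.2) := by
  unfold fI; fun_prop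

lemma integrable_norm_shape : Integrable (fun z : ℝ => |z| * Real.exp (-z ^ 2 / 2)) := by
  have h := (integrable_mul_exp_neg_mul_sq (show (0:ℝ) < 1/2 by norm_num)).abs
  have hf : ∀ z : ℝ, |z * Real.exp (-(1/2) * z ^ 2)| = |z| * Real.exp (-z ^ 2 / 2) := by
    intro z
    rw [abs_mul, abs_of_pos (Real.exp_pos _)]
    congr 2
    ring
  exact h.congr (Filter.Eventually.of_forall hf)

lemma integrable_fI (x y : ℝ) : Integrable (fun z => fI x y z) := by
  refine integrable_norm_shape.mono' ?_ (Filter.Eventually.of_forall fun z => ?_)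
  · exact ((cont_fI x).comp (Continuous.prodMk_right y)).aestronglyMeasurable
  · rw [norm_fI]

lemma integral_y (x yJ : ℝ) (hx : x ≠ 0) (hyJ : 0 ≤ yJ) (z : ℝ) :
    ∫ y in Ioc (0:ℝ) yJ, fI x y z = GI x yJ z := by
  rw [← intervalIntegral.integral_of_le hyJ]
  have hrw : ∀ y : ℝ, fI x y z
      = ((z : ℂ) * Complex.exp (-(z : ℂ) ^ 2 / 2)) * Complex.exp ((-Complex.I * x * z) * y) := by
    intro y
    unfold fI
    congr 1
    exact congrArg Complex.exp (by ring)
  simp_rw [hrw]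
  rw [intervalIntegral.integral_const_mul]
  by_cases hz : z = 0
  · subst hz
    simp [GI]
  · have hxC : (x : ℂ) ≠ 0 := Complex.ofReal_ne_zero.mpr hx
    have hzC : (z : ℂ) ≠ 0 := Complex.ofReal_ne_zero.mpr hz
    have hc : (-Complex.I * x * z) ≠ 0 :=
      mul_ne_zero (mul_ne_zero (neg_ne_zero.mpr Complex.I_ne_zero) hxC) hzC
    rw [integral_exp_mul_complex hc]
    have he : Complex.exp (-Complex.I * ↑x * ↑z * ↑yJ) = Complex.exp (-Complex.I * ↑x * ↑yJ * ↑z) := by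
      congr 1; ring
    rw [Complex.ofReal_zero, mul_zero, Complex.exp_zero, he]
    unfold GI
    field_simp
    ring

lemma sqrt_two_pi_cpow : ((Real.pi : ℂ) / (1/2 : ℂ)) ^ (1/2 : ℂ)
    = ((Real.sqrt (2 * Real.pi) : ℝ) : ℂ) := by
  have h0 : ((Real.pi : ℂ) / (1/2 : ℂ)) = ((2 * Real.pi : ℝ) : ℂ) := by push_cast; ring
  rw [h0, Real.sqrt_eq_rpow, Complex.ofReal_cpow (by positivity)]
  norm_num

lemma gauss_ft (t : ℝ) : ∫ z : ℝ, Complex.exp (-(z:ℂ) ^ 2 / 2) * Complex.exp (-Complex.I * t * z)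
    = ((Real.sqrt (2 * Real.pi) : ℝ) : ℂ) * Complex.exp (-(t:ℂ) ^ 2 / 2) := by
  have h := fourierIntegral_gaussian (b := (1/2 : ℂ)) (by norm_num) (-(t:ℂ))
  have hl : ∀ z : ℝ, Complex.exp (Complex.I * (-(t:ℂ)) * z) * Complex.exp (-(1/2 : ℂ) * z ^ 2)
      = Complex.exp (-(z:ℂ) ^ 2 / 2) * Complex.exp (-Complex.I * t * z) := by
    intro z
    rw [mul_comm]
    congr 1
    · exact congrArg Complex.exp (by ring)
    · exact congrArg Complex.exp (by ring)
  simp_rw [hl] at h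
  rw [h, sqrt_two_pi_cpow]
  congr 1
  exact congrArg Complex.exp (by ring)

lemma gauss_plain : ∫ z : ℝ, Complex.exp (-(z:ℂ) ^ 2 / 2)
    = ((Real.sqrt (2 * Real.pi) : ℝ) : ℂ) := by
  have h := gauss_ft 0
  simpa using h

lemma integrable_cexp_gauss : Integrable (fun z : ℝ => Complex.exp (-(z:ℂ) ^ 2 / 2)) := by
  have h := integrable_cexp_neg_mul_sq (b := (1/2 : ℂ)) (by norm_num)
  exact h.congr (Filter.Eventually.of_forall fun z => congrArg Complex.exp (by ring))

lemma integrable_gauss_phase (c : ℂ) :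
    Integrable (fun z : ℝ => Complex.exp (-(z:ℂ) ^ 2 / 2) * Complex.exp (c * z)) := by
  have h := integrable_cexp_quadratic (b := (1/2 : ℂ)) (by norm_num) c 0
  refine h.congr (Filter.Eventually.of_forall fun z => ?_)
  simp only [← Complex.exp_add]
  exact congrArg Complex.exp (by ring)

lemma integrable_GI (x yJ : ℝ) : Integrable (fun z : ℝ => GI x yJ z) := by
  unfold GI
  simp_rw [mul_one_sub]
  exact (integrable_cexp_gauss.sub (integrable_gauss_phase (-Complex.I * x * yJ))).div_const _

lemma integral_GI (x yJ : ℝ) :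
    ∫ z : ℝ, GI x yJ z
      = (((Real.sqrt (2 * Real.pi) : ℝ) : ℂ)
          - ((Real.sqrt (2 * Real.pi) : ℝ) : ℂ) * Complex.exp (-((x * yJ : ℝ) : ℂ) ^ 2 / 2))
        / (Complex.I * x) := by
  unfold GI
  simp_rw [mul_one_sub]
  rw [integral_div, integral_sub integrable_cexp_gauss]
  · congr 2
    · exact gauss_plain
    · have h := gauss_ft (x * yJ)
      rw [← h]
      congr 1
      funext z
      congr 1
      exact congrArg Complex.exp (by push_cast; ring)
  · have h := integrable_gauss_phase (-Complex.I * x * yJ)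
    exact h.congr (Filter.Eventually.of_forall fun z => rfl)

lemma norm_GI_le (x yJ : ℝ) (hx : x ≠ 0) (z : ℝ) :
    ‖GI x yJ z‖ ≤ 2 / |x| * Real.exp (-z ^ 2 / 2) := by
  unfold GI
  rw [norm_div, norm_mul]
  have hnum1 : ‖Complex.exp (-(z:ℂ) ^ 2 / 2)‖ = Real.exp (-z ^ 2 / 2) := by
    rw [show (-(z:ℂ) ^ 2 / 2) = ((-z ^ 2 / 2 : ℝ) : ℂ) by push_cast; ring]
    simp [Complex.norm_exp, ← Complex.ofReal_pow]
  have hnum2 : ‖1 - Complex.exp (-Complex.I * x * yJ * z)‖ ≤ 2 := by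
    refine (norm_sub_le _ _).trans ?_
    have h1 : ‖Complex.exp (-Complex.I * (x:ℂ) * yJ * z)‖ = 1 := by
      simp [Complex.norm_exp]
    rw [norm_one, h1]; norm_num
  have hden : ‖Complex.I * (x:ℂ)‖ = |x| := by
    simp [map_mul]
  rw [hnum1, hden, show 2 / |x| * Real.exp (-z ^ 2 / 2) = Real.exp (-z ^ 2 / 2) * 2 / |x|
    by ring]
  gcongr

lemma integrable_gauss_real : Integrable (fun z : ℝ => Real.exp (-z ^ 2 / 2)) := by
  have h := integrable_exp_neg_mul_sq (show (0:ℝ) < 1/2 by norm_num)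
  exact h.congr (Filter.Eventually.of_forall fun z => congrArg Real.exp (by ring))

lemma gauss_tail (zK : ℝ) (hzK : 0 < zK) :
    ∫ z in (Ioc (-zK) zK)ᶜ, Real.exp (-z ^ 2 / 2)
      ≤ Real.sqrt (2 * Real.pi) * Real.exp (-zK ^ 2 / 2) := by
  have hInt := integrable_gauss_real
  have hcompl : (Ioc (-zK) zK)ᶜ = Iic (-zK) ∪ Ioi zK := by
    ext u
    simp only [Set.mem_compl_iff, Set.mem_Ioc, Set.mem_union, Set.mem_Iic, Set.mem_Ioi,
      not_and_or, not_lt, not_le]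
  rw [hcompl]
  rw [setIntegral_union (Iic_disjoint_Ioi (by linarith)) measurableSet_Ioi
    hInt.integrableOn hInt.integrableOn]
  have h1 : ∫ z in Iic (-zK), Real.exp (-z ^ 2 / 2) = ∫ z in Ioi zK, Real.exp (-z ^ 2 / 2) := by
    have h := integral_comp_neg_Iic (-zK) (fun z => Real.exp (-z ^ 2 / 2))
    simp only [neg_sq, neg_neg] at h
    exact h
  have h2 : ∫ z in Ioi zK, Real.exp (-z ^ 2 / 2)
      ≤ Real.sqrt (2 * Real.pi) / 2 * Real.exp (-zK ^ 2 / 2) := by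
    have A : MeasurableEmbedding (fun z : ℝ => z + zK) :=
      (Homeomorph.addRight zK).isClosedEmbedding.measurableEmbedding
    have hmap : ∫ z in Ioi zK, Real.exp (-z ^ 2 / 2)
        = ∫ u in Ioi (0:ℝ), Real.exp (-(u + zK) ^ 2 / 2) := by
      have h := A.setIntegral_map (μ := volume) (fun z => Real.exp (-z ^ 2 / 2)) (Ioi zK)
      rw [map_add_right_eq_self volume zK] at h
      rw [h]
      congr 1
      ext u
      simp [Set.mem_preimage, lt_add_iff_pos_left]
    rw [hmap]
    have hbound : ∀ u ∈ Ioi (0:ℝ),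
        Real.exp (-(u + zK) ^ 2 / 2) ≤ Real.exp (-zK ^ 2 / 2) * Real.exp (-u ^ 2 / 2) := by
      intro u hu
      rw [← Real.exp_add]
      apply Real.exp_le_exp.mpr
      have hu' : 0 < u := hu
      nlinarith [hzK.le, hu'.le]
    have hIntShift : IntegrableOn (fun u => Real.exp (-(u + zK) ^ 2 / 2)) (Ioi (0:ℝ)) := by
      refine Integrable.mono' ((hInt.const_mul (Real.exp (-zK ^ 2 / 2))).integrableOn) ?_ ?_
      · exact (Real.continuous_exp.comp (by fun_prop)).aestronglyMeasurable
      · refine (ae_restrict_iff' measurableSet_Ioi).mpr (Filter.Eventually.of_forall ?_)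
        intro u hu
        rw [Real.norm_eq_abs, abs_of_pos (Real.exp_pos _)]
        exact hbound u hu
    calc ∫ u in Ioi (0:ℝ), Real.exp (-(u + zK) ^ 2 / 2)
        ≤ ∫ u in Ioi (0:ℝ), Real.exp (-zK ^ 2 / 2) * Real.exp (-u ^ 2 / 2) :=
          setIntegral_mono_on hIntShift
            ((hInt.const_mul (Real.exp (-zK ^ 2 / 2))).integrableOn)
            measurableSet_Ioi hbound
      _ = Real.exp (-zK ^ 2 / 2) * ∫ u in Ioi (0:ℝ), Real.exp (-u ^ 2 / 2) := by
          rw [integral_const_mul]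
      _ = Real.exp (-zK ^ 2 / 2) * (Real.sqrt (2 * Real.pi) / 2) := by
          have h := integral_gaussian_Ioi (1/2)
          have hform : ∀ u : ℝ, Real.exp (-(1/2) * u ^ 2) = Real.exp (-u ^ 2 / 2) :=
            fun u => congrArg Real.exp (by ring)
          simp_rw [hform] at h
          rw [show Real.pi / (1/2) = 2 * Real.pi from by ring] at h
          rw [h]
      _ = Real.sqrt (2 * Real.pi) / 2 * Real.exp (-zK ^ 2 / 2) := by ring
  rw [h1]
  linarith

lemma integrable_uncurry_fI (x yJ : ℝ) (t : Set ℝ) :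
    Integrable (Function.uncurry fun y z => fI x y z)
      ((volume.restrict (Ioc (0:ℝ) yJ)).prod (volume.restrict t)) := by
  have hmeas : AEStronglyMeasurable (Function.uncurry fun y z => fI x y z)
      ((volume.restrict (Ioc (0:ℝ) yJ)).prod (volume.restrict t)) :=
    (cont_fI x).aestronglyMeasurable
  rw [integrable_prod_iff hmeas]
  constructor
  · exact Filter.Eventually.of_forall fun y => (integrable_fI x y).restrict
  · have hfun : (fun y : ℝ => ∫ z, ‖Function.uncurry (fun y z => fI x y z) (y, z)‖
        ∂(volume.restrict t)) = fun _ : ℝ => ∫ z in t, |z| * Real.exp (-z ^ 2 / 2) := by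
      funext y
      simp_rw [Function.uncurry, norm_fI]
    rw [hfun]
    exact integrableOn_const measure_Ioc_lt_top.ne

end Stmt10Aux

/-- truncation error bound for the Fourier-integral representation of 1/x,
valid for 1/b ≤ |x| ≤ 1. -/
theorem stmt_10 (b yJ zK : ℝ) (hb : 1 ≤ b) (hyJ : 0 < yJ) (hzK : 0 < zK)
    (x : ℝ) (hx1 : 1 / b ≤ |x|) (hx2 : |x| ≤ 1) :
    ‖truncInv yJ zK x - 1 / (x : ℂ)‖
      ≤ (1 / |x|) * Real.exp (-(x * yJ) ^ 2 / 2) + (2 / |x|) * Real.exp (-zK ^ 2 / 2) := by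
  classical
  have hbpos : (0:ℝ) < 1 / b := by positivity
  have hxabs : 0 < |x| := lt_of_lt_of_le hbpos hx1
  have hx : x ≠ 0 := abs_pos.mp hxabs
  have hxC : (x : ℂ) ≠ 0 := Complex.ofReal_ne_zero.mpr hx
  have hyJ' : (0:ℝ) ≤ yJ := hyJ.le
  have hzz : -zK ≤ zK := by linarith
  set sq : ℝ := Real.sqrt (2 * Real.pi) with hsqdef
  have hsq0 : 0 < sq := Real.sqrt_pos.mpr (by positivity)
  have hsqC : (sq : ℂ) ≠ 0 := Complex.ofReal_ne_zero.mpr hsq0.ne'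
  set s : Set ℝ := Set.Ioc (-zK) zK with hsdef
  set E : ℂ := Complex.exp (-((x * yJ : ℝ) : ℂ) ^ 2 / 2) with hEdef
  set T : ℂ := ∫ z in sᶜ, GI x yJ z with hTdef
  -- Step 1: rewrite truncInv with fI and set integrals
  have step1 : truncInv yJ zK x
      = (Complex.I / (sq : ℂ)) * ∫ y in Set.Ioc (0:ℝ) yJ, ∫ z in s, fI x y z := by
    unfold truncInv
    rw [intervalIntegral.integral_of_le hyJ']
    congr 1
    refine setIntegral_congr_fun measurableSet_Ioc fun y _ => ?_
    rw [intervalIntegral.integral_of_le hzz]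
    rfl
  -- Step 2: split the inner integral
  have step2 : ∀ y : ℝ, ∫ z in s, fI x y z
      = (∫ z, fI x y z) - ∫ z in sᶜ, fI x y z := fun y =>
    eq_sub_of_add_eq (integral_add_compl measurableSet_Ioc (integrable_fI x y))
  -- integrability of the two marginal functions
  have hIntUniv := integrable_uncurry_fI x yJ Set.univ
  rw [Measure.restrict_univ] at hIntUniv
  have hIntCompl := integrable_uncurry_fI x yJ sᶜ
  have hm1 : Integrable (fun y => ∫ z, fI x y z) (volume.restrict (Set.Ioc (0:ℝ) yJ)) :=
    hIntUniv.integral_prod_left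
  have hm2 : Integrable (fun y => ∫ z in sᶜ, fI x y z) (volume.restrict (Set.Ioc (0:ℝ) yJ)) :=
    hIntCompl.integral_prod_left
  -- Step 3 + 4: swap the integrals
  have hswapU : ∫ y in Set.Ioc (0:ℝ) yJ, ∫ z, fI x y z
      = ∫ z : ℝ, ∫ y in Set.Ioc (0:ℝ) yJ, fI x y z := integral_integral_swap hIntUniv
  have hswapC : ∫ y in Set.Ioc (0:ℝ) yJ, ∫ z in sᶜ, fI x y z
      = ∫ z in sᶜ, ∫ y in Set.Ioc (0:ℝ) yJ, fI x y z := integral_integral_swap hIntCompl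
  have hinner : ∀ z : ℝ, ∫ y in Set.Ioc (0:ℝ) yJ, fI x y z = GI x yJ z :=
    integral_y x yJ hx hyJ'
  have hfull : ∫ y in Set.Ioc (0:ℝ) yJ, ∫ z, fI x y z
      = ((sq : ℂ) - (sq : ℂ) * E) / (Complex.I * x) := by
    rw [hswapU]
    simp_rw [hinner]
    rw [integral_GI x yJ]
  have htail : ∫ y in Set.Ioc (0:ℝ) yJ, ∫ z in sᶜ, fI x y z = T := by
    rw [hswapC, hTdef]
    refine setIntegral_congr_fun measurableSet_Ioc.compl fun z _ => hinner z
  -- Key identity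
  have key : truncInv yJ zK x - 1 / (x:ℂ)
      = -(E / (x:ℂ)) - (Complex.I / (sq : ℂ)) * T := by
    rw [step1]
    have : ∫ y in Set.Ioc (0:ℝ) yJ, ∫ z in s, fI x y z
        = ((sq : ℂ) - (sq : ℂ) * E) / (Complex.I * x) - T := by
      calc ∫ y in Set.Ioc (0:ℝ) yJ, ∫ z in s, fI x y z
          = ∫ y in Set.Ioc (0:ℝ) yJ,
            ((∫ z, fI x y z) - ∫ z in sᶜ, fI x y z) := by simp_rw [step2]
        _ = (∫ y in Set.Ioc (0:ℝ) yJ, ∫ z, fI x y z)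
            - ∫ y in Set.Ioc (0:ℝ) yJ, ∫ z in sᶜ, fI x y z := integral_sub hm1 hm2
        _ = ((sq : ℂ) - (sq : ℂ) * E) / (Complex.I * x) - T := by rw [hfull, htail]
    rw [this]
    have hI : Complex.I ≠ 0 := Complex.I_ne_zero
    field_simp
    ring
  rw [key]
  have habs1 : ‖-(E / (x:ℂ))‖ = (1 / |x|) * Real.exp (-(x * yJ) ^ 2 / 2) := by
    rw [norm_neg, norm_div]
    have hE : ‖E‖ = Real.exp (-(x * yJ) ^ 2 / 2) := by
      rw [hEdef, show (-((x * yJ : ℝ) : ℂ) ^ 2 / 2) = ((-(x * yJ) ^ 2 / 2 : ℝ) : ℂ)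
        by push_cast; ring]
      simp only [Complex.norm_exp, Complex.ofReal_re]
    rw [hE, Complex.norm_real, Real.norm_eq_abs]
    ring
  have habs2 : ‖(Complex.I / (sq : ℂ)) * T‖ ≤ (2 / |x|) * Real.exp (-zK ^ 2 / 2) := by
    rw [norm_mul, norm_div, Complex.norm_I,
      Complex.norm_real, Real.norm_eq_abs, abs_of_pos hsq0]
    have hTle : ‖T‖ ≤ 2 / |x| * ∫ z in sᶜ, Real.exp (-z ^ 2 / 2) := by
      rw [hTdef]
      calc ‖∫ z in sᶜ, GI x yJ z‖
          ≤ ∫ z in sᶜ, 2 / |x| * Real.exp (-z ^ 2 / 2) := by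
            refine norm_integral_le_of_norm_le
              ((integrable_gauss_real.const_mul (2 / |x|)).restrict)
              (Filter.Eventually.of_forall fun z => norm_GI_le x yJ hx z)
        _ = 2 / |x| * ∫ z in sᶜ, Real.exp (-z ^ 2 / 2) := integral_const_mul _ _
    have htail2 : ∫ z in sᶜ, Real.exp (-z ^ 2 / 2) ≤ sq * Real.exp (-zK ^ 2 / 2) :=
      gauss_tail zK hzK
    have h2x : (0:ℝ) ≤ 2 / |x| := by positivity
    calc 1 / sq * ‖T‖ ≤ 1 / sq * (2 / |x| * (sq * Real.exp (-zK ^ 2 / 2))) := by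
          refine mul_le_mul_of_nonneg_left (hTle.trans ?_) (by positivity)
          exact mul_le_mul_of_nonneg_left htail2 h2x
      _ = (2 / |x|) * Real.exp (-zK ^ 2 / 2) := by field_simp
  calc ‖-(E / (x:ℂ)) - Complex.I / (sq:ℂ) * T‖
      ≤ ‖-(E / (x:ℂ))‖ + ‖Complex.I / (sq:ℂ) * T‖ := norm_sub_le _ _
    _ ≤ (1 / |x|) * Real.exp (-(x * yJ) ^ 2 / 2) + (2 / |x|) * Real.exp (-zK ^ 2 / 2) :=
        add_le_add (le_of_eq habs1) habs2
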